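/- Let A be a real symmetric n×n matrix and D a nonsingular real n×n matrix. Let λ_j and λ̃_j denote the j-th largest eigenvalues of A and Dᵀ A D respectively. Then for all j, |λ̃_j − λ_j| ≤ |λ_j| · ‖DᵀD − I‖₂. -/

import Mathlib

open scoped Matrix Matrix.Norms.L2Operator

/-- `μ` is the decreasing enumeration of the eigenvalues of the real symmetric matrix `A`. -/
def IsDecEigenvalueSeq {n : ℕ} (A : Matrix (Fin n) (Fin n) ℝ) (hA : A.IsHermitian)
    (μ : Fin n → ℝ) : Prop :=
  Antitone μ ∧ ∃ e : Equiv.Perm (Fin n), μ = hA.eigenvalues ∘ e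

section Aux

open Matrix Finset
open scoped RealInnerProductSpace

variable {n : ℕ}

private lemma repr_zero_of_mem_span (v : OrthonormalBasis (Fin n) ℝ (EuclideanSpace ℝ (Fin n)))
    {s : Set (Fin n)} {x : EuclideanSpace ℝ (Fin n)}
    (hx : x ∈ Submodule.span ℝ (v '' s)) {i : Fin n} (hi : i ∉ s) : v.repr x i = 0 := by
  induction hx using Submodule.span_induction with
  | mem y hy =>
    obtain ⟨k, hk, rfl⟩ := hy
    rw [v.repr_apply_apply]
    exact v.orthonormal.2 (fun h : i = k => hi (h ▸ hk))
  | zero => simp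
  | add y z _ _ hy hz => simp [map_add, hy, hz]
  | smul c y _ hy => simp [_root_.map_smul, hy]

private lemma inner_map_eq_sum (v : OrthonormalBasis (Fin n) ℝ (EuclideanSpace ℝ (Fin n)))
    (T : EuclideanSpace ℝ (Fin n) →ₗ[ℝ] EuclideanSpace ℝ (Fin n)) (μ : Fin n → ℝ)
    (hT : ∀ i, T (v i) = μ i • v i) (x : EuclideanSpace ℝ (Fin n)) :
    ⟪x, T x⟫ = ∑ i, μ i * (v.repr x i)^2 := by
  have h1 : T x = ∑ k, (v.repr x k * μ k) • v k := by
    conv_lhs => rw [← v.sum_repr x]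
    rw [map_sum]
    refine Finset.sum_congr rfl fun k _ => ?_
    rw [_root_.map_smul, hT k, smul_smul]
  have h2 : ∀ i, v.repr (T x) i = μ i * v.repr x i := by
    intro i
    rw [h1, map_sum]
    simp only [_root_.map_smul, v.repr_self]
    rw [WithLp.ofLp_sum, Finset.sum_apply i Finset.univ _]
    simp [EuclideanSpace.single_apply, mul_comm]
  rw [← v.repr.inner_map_map x (T x)]
  rw [PiLp.inner_apply]
  refine Finset.sum_congr rfl fun i _ => ?_
  simp [h2 i]
  ring

private lemma norm_sq_eq_sum_repr (v : OrthonormalBasis (Fin n) ℝ (EuclideanSpace ℝ (Fin n)))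
    (x : EuclideanSpace ℝ (Fin n)) : ‖x‖^2 = ∑ i, (v.repr x i)^2 := by
  have h := inner_map_eq_sum v LinearMap.id (fun _ => 1) (by simp) x
  rw [← real_inner_self_eq_norm_sq]
  simpa using h

private lemma rayleigh_le_of_mem (v : OrthonormalBasis (Fin n) ℝ (EuclideanSpace ℝ (Fin n)))
    (T : EuclideanSpace ℝ (Fin n) →ₗ[ℝ] EuclideanSpace ℝ (Fin n)) (μ : Fin n → ℝ)
    (hT : ∀ i, T (v i) = μ i • v i) (hmono : Antitone μ) (j : Fin n)
    {x : EuclideanSpace ℝ (Fin n)} (hx : x ∈ Submodule.span ℝ (v '' {i | j ≤ i})) :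
    ⟪x, T x⟫ ≤ μ j * ‖x‖^2 := by
  rw [inner_map_eq_sum v T μ hT, norm_sq_eq_sum_repr v, Finset.mul_sum]
  refine Finset.sum_le_sum fun i _ => ?_
  by_cases hij : j ≤ i
  · exact mul_le_mul_of_nonneg_right (hmono hij) (sq_nonneg _)
  · rw [repr_zero_of_mem_span v hx hij]
    simp

private lemma le_rayleigh_of_mem (v : OrthonormalBasis (Fin n) ℝ (EuclideanSpace ℝ (Fin n)))
    (T : EuclideanSpace ℝ (Fin n) →ₗ[ℝ] EuclideanSpace ℝ (Fin n)) (μ : Fin n → ℝ)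
    (hT : ∀ i, T (v i) = μ i • v i) (hmono : Antitone μ) (j : Fin n)
    {x : EuclideanSpace ℝ (Fin n)} (hx : x ∈ Submodule.span ℝ (v '' {i | i ≤ j})) :
    μ j * ‖x‖^2 ≤ ⟪x, T x⟫ := by
  rw [inner_map_eq_sum v T μ hT, norm_sq_eq_sum_repr v, Finset.mul_sum]
  refine Finset.sum_le_sum fun i _ => ?_
  by_cases hij : i ≤ j
  · exact mul_le_mul_of_nonneg_right (hmono hij) (sq_nonneg _)
  · rw [repr_zero_of_mem_span v hx hij]
    simp

private lemma finrank_span_onb (v : OrthonormalBasis (Fin n) ℝ (EuclideanSpace ℝ (Fin n)))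
    (s : Finset (Fin n)) :
    Module.finrank ℝ (Submodule.span ℝ (v '' (s : Set (Fin n)))) = s.card := by
  have hrange : Set.range (v ∘ (Subtype.val : ↥(s : Set (Fin n)) → Fin n)) = v '' (s : Set (Fin n)) := by
    rw [Set.range_comp, Subtype.range_coe]
  rw [← hrange, finrank_span_eq_card
    (v.orthonormal.linearIndependent.comp _ Subtype.val_injective)]
  simp

private lemma exists_ne_zero_mem_inf (S T : Submodule ℝ (EuclideanSpace ℝ (Fin n)))
    (h : n < Module.finrank ℝ S + Module.finrank ℝ T) :
    ∃ x : EuclideanSpace ℝ (Fin n), x ≠ 0 ∧ x ∈ S ∧ x ∈ T := by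
  have hn : Module.finrank ℝ (EuclideanSpace ℝ (Fin n)) = n := by simp
  have h1 := Submodule.finrank_sup_add_finrank_inf_eq S T
  have h2 : Module.finrank ℝ ↥(S ⊔ T) ≤ n := by
    have := Submodule.finrank_le (S ⊔ T)
    rwa [hn] at this
  have h3 : S ⊓ T ≠ ⊥ := by
    intro hbot
    rw [hbot, finrank_bot] at h1
    omega
  obtain ⟨x, hx, hx0⟩ := Submodule.exists_mem_ne_zero_of_ne_bot h3
  exact ⟨x, hx0, (Submodule.mem_inf.1 hx).1, (Submodule.mem_inf.1 hx).2⟩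

private lemma dot_eq_inner (x y : EuclideanSpace ℝ (Fin n)) :
    (x : Fin n → ℝ) ⬝ᵥ (y : Fin n → ℝ) = ⟪x, y⟫ := by
  simp [PiLp.inner_apply, dotProduct, mul_comm]

private lemma keyL (B D : Matrix (Fin n) (Fin n) ℝ) (hB : B.IsHermitian)
    (hBD : (Dᵀ * B * D).IsHermitian) (hD : IsUnit D)
    (μ μ' : Fin n → ℝ) (hμ : IsDecEigenvalueSeq B hB μ)
    (hμ' : IsDecEigenvalueSeq (Dᵀ * B * D) hBD μ')
    (a b : ℝ) (ha : 0 < a)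
    (hlo : ∀ x : Fin n → ℝ, a * (x ⬝ᵥ x) ≤ (D *ᵥ x) ⬝ᵥ (D *ᵥ x))
    (hhi : ∀ x : Fin n → ℝ, (D *ᵥ x) ⬝ᵥ (D *ᵥ x) ≤ b * (x ⬝ᵥ x)) :
    ∀ j : Fin n, μ' j ≤ max (a * μ j) (b * μ j) := by
  intro j
  obtain ⟨hmono, e, hμe⟩ := hμ
  obtain ⟨hmono', e', hμ'e⟩ := hμ'
  set v := hB.eigenvectorBasis.reindex e.symm with hvdef
  set w := hBD.eigenvectorBasis.reindex e'.symm with hwdef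
  have hv : ∀ i, Matrix.toEuclideanLin B (v i) = μ i • v i := by
    intro i
    have h := congrArg (WithLp.equiv 2 (Fin n → ℝ)).symm (hB.mulVec_eigenvectorBasis (e i))
    rw [Matrix.toEuclideanLin_apply]
    simpa [hvdef, OrthonormalBasis.reindex_apply, hμe] using h
  have hw : ∀ i, Matrix.toEuclideanLin (Dᵀ * B * D) (w i) = μ' i • w i := by
    intro i
    have h := congrArg (WithLp.equiv 2 (Fin n → ℝ)).symm (hBD.mulVec_eigenvectorBasis (e' i))
    rw [Matrix.toEuclideanLin_apply]
    simpa [hwdef, OrthonormalBasis.reindex_apply, hμ'e] using h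
  have hDdet : IsUnit D.det := (Matrix.isUnit_iff_isUnit_det D).1 hD
  have hD1 : D * D⁻¹ = 1 := Matrix.mul_nonsing_inv D hDdet
  have hD2 : D⁻¹ * D = 1 := Matrix.nonsing_inv_mul D hDdet
  let f : EuclideanSpace ℝ (Fin n) ≃ₗ[ℝ] EuclideanSpace ℝ (Fin n) :=
    LinearEquiv.ofLinear (Matrix.toEuclideanLin D) (Matrix.toEuclideanLin D⁻¹)
      (LinearMap.ext fun x => show WithLp.toLp 2 (D *ᵥ (D⁻¹ *ᵥ x.ofLp)) = x by
        rw [Matrix.mulVec_mulVec, hD1, Matrix.one_mulVec, WithLp.toLp_ofLp])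
      (LinearMap.ext fun x => show WithLp.toLp 2 (D⁻¹ *ᵥ (D *ᵥ x.ofLp)) = x by
        rw [Matrix.mulVec_mulVec, hD2, Matrix.one_mulVec, WithLp.toLp_ofLp])
  set S := Submodule.span ℝ (w '' {i | i ≤ j}) with hSdef
  set Tv := Submodule.span ℝ (v '' {i | j ≤ i}) with hTdef
  have hfr : n < Module.finrank ℝ S + Module.finrank ℝ (Tv.comap f.toLinearMap) := by
    have e1 : Module.finrank ℝ S = j + 1 := by
      rw [hSdef, show {i : Fin n | i ≤ j} = ((Finset.Iic j : Finset (Fin n)) : Set (Fin n)) by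
        ext i; simp, finrank_span_onb, Fin.card_Iic]
    have e2 : Module.finrank ℝ (Tv.comap f.toLinearMap) = n - j := by
      rw [Submodule.comap_equiv_eq_map_symm, LinearEquiv.finrank_map_eq, hTdef,
        show {i : Fin n | j ≤ i} = ((Finset.Ici j : Finset (Fin n)) : Set (Fin n)) by
          ext i; simp, finrank_span_onb, Fin.card_Ici]
    have := j.isLt
    omega
  obtain ⟨x, hx0, hxS, hxT⟩ := exists_ne_zero_mem_inf _ _ hfr
  set y : EuclideanSpace ℝ (Fin n) := WithLp.toLp 2 (D *ᵥ x) with hydef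
  have hyT : y ∈ Tv := hxT
  have h1 : μ' j * ‖x‖^2 ≤ ⟪x, Matrix.toEuclideanLin (Dᵀ * B * D) x⟫ :=
    le_rayleigh_of_mem w _ μ' hw hmono' j hxS
  have h2 : ⟪x, Matrix.toEuclideanLin (Dᵀ * B * D) x⟫ = ⟪y, Matrix.toEuclideanLin B y⟫ := by
    rw [← dot_eq_inner, ← dot_eq_inner]
    show x.ofLp ⬝ᵥ ((Dᵀ * B * D) *ᵥ x.ofLp) = y.ofLp ⬝ᵥ (B *ᵥ y.ofLp)
    rw [hydef, WithLp.ofLp_toLp]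
    rw [show (Dᵀ * B * D) *ᵥ x.ofLp = Dᵀ *ᵥ (B *ᵥ (D *ᵥ x.ofLp)) by
      rw [Matrix.mulVec_mulVec, Matrix.mulVec_mulVec]]
    rw [Matrix.dotProduct_mulVec x.ofLp Dᵀ, Matrix.vecMul_transpose]
  have h3 : ⟪y, Matrix.toEuclideanLin B y⟫ ≤ μ j * ‖y‖^2 :=
    rayleigh_le_of_mem v _ μ hv hmono j hyT
  have hnorm : ∀ u : EuclideanSpace ℝ (Fin n), (u : Fin n → ℝ) ⬝ᵥ u = ‖u‖^2 := by
    intro u; rw [dot_eq_inner, real_inner_self_eq_norm_sq]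
  have hxpos : (0:ℝ) < ‖x‖^2 := pow_pos (norm_pos_iff.2 hx0) 2
  have hylo : a * ‖x‖^2 ≤ ‖y‖^2 := by
    have := hlo x; rwa [hnorm x, show D *ᵥ x.ofLp = y.ofLp from rfl, hnorm y] at this
  have hyhi : ‖y‖^2 ≤ b * ‖x‖^2 := by
    have := hhi x; rwa [hnorm x, show D *ᵥ x.ofLp = y.ofLp from rfl, hnorm y] at this
  rcases le_or_gt 0 (μ j) with hsgn | hsgn
  · refine le_max_of_le_right ?_
    have : μ' j * ‖x‖^2 ≤ (b * μ j) * ‖x‖^2 := by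
      calc μ' j * ‖x‖^2 ≤ μ j * ‖y‖^2 := h1.trans (h2 ▸ h3)
        _ ≤ μ j * (b * ‖x‖^2) := mul_le_mul_of_nonneg_left hyhi hsgn
        _ = (b * μ j) * ‖x‖^2 := by ring
    exact le_of_mul_le_mul_right this hxpos
  · refine le_max_of_le_left ?_
    have : μ' j * ‖x‖^2 ≤ (a * μ j) * ‖x‖^2 := by
      calc μ' j * ‖x‖^2 ≤ μ j * ‖y‖^2 := h1.trans (h2 ▸ h3)
        _ ≤ μ j * (a * ‖x‖^2) := mul_le_mul_of_nonpos_left hylo hsgn.le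
        _ = (a * μ j) * ‖x‖^2 := by ring
    exact le_of_mul_le_mul_right this hxpos

private lemma isDec_congr {M N : Matrix (Fin n) (Fin n) ℝ} (h : M = N)
    (hM : M.IsHermitian) (hN : N.IsHermitian) {μ : Fin n → ℝ}
    (hμ : IsDecEigenvalueSeq M hM μ) : IsDecEigenvalueSeq N hN μ := by
  subst h; exact hμ

end Aux

set_option maxHeartbeats 1000000 in
/-- Relative eigenvalue perturbation bound for a congruence perturbation `Dᵀ A D` of a
real symmetric matrix `A`, with `D` nonsingular. -/
theorem eigenvalue_perturbation_rel_bound {n : ℕ}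
    (A D : Matrix (Fin n) (Fin n) ℝ)
    (hA : A.IsHermitian) (hD : IsUnit D)
    (hDAD : (Dᵀ * A * D).IsHermitian)
    (μ μ' : Fin n → ℝ)
    (hμ : IsDecEigenvalueSeq A hA μ)
    (hμ' : IsDecEigenvalueSeq (Dᵀ * A * D) hDAD μ') :
    ∀ j : Fin n, |μ' j - μ j| ≤ |μ j| * ‖Dᵀ * D - 1‖ := by
  intro j
  have hne : Nonempty (Fin n) := ⟨j⟩
  set ε : ℝ := ‖Dᵀ * D - 1‖ with hεdef
  have hε0 : 0 ≤ ε := norm_nonneg _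
  let toE : (Fin n → ℝ) → EuclideanSpace ℝ (Fin n) := (EuclideanSpace.equiv (Fin n) ℝ).symm
  have hnorm : ∀ u : Fin n → ℝ, u ⬝ᵥ u = ‖toE u‖^2 := by
    intro u
    rw [show u ⬝ᵥ u = (inner ℝ (toE u) (toE u) : ℝ) from dot_eq_inner _ _,
      real_inner_self_eq_norm_sq]
  have hdotnn : ∀ u : Fin n → ℝ, 0 ≤ u ⬝ᵥ u := by
    intro u
    rw [hnorm u]
    positivity
  -- quadratic perturbation bound from the operator norm
  have hquad : ∀ x : Fin n → ℝ,
      |(D *ᵥ x) ⬝ᵥ (D *ᵥ x) - x ⬝ᵥ x| ≤ ε * (x ⬝ᵥ x) := by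
    intro x
    have h1 : (D *ᵥ x) ⬝ᵥ (D *ᵥ x) = x ⬝ᵥ ((Dᵀ * D) *ᵥ x) := by
      rw [show (Dᵀ * D) *ᵥ x = Dᵀ *ᵥ (D *ᵥ x) by rw [Matrix.mulVec_mulVec]]
      rw [Matrix.dotProduct_mulVec x Dᵀ, Matrix.vecMul_transpose]
    have h2 : (D *ᵥ x) ⬝ᵥ (D *ᵥ x) - x ⬝ᵥ x = x ⬝ᵥ ((Dᵀ * D - 1) *ᵥ x) := by
      rw [h1, Matrix.sub_mulVec, Matrix.one_mulVec, dotProduct_sub]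
    rw [h2]
    have hcs : |x ⬝ᵥ ((Dᵀ * D - 1) *ᵥ x)| ≤ ‖toE x‖ * ‖toE ((Dᵀ * D - 1) *ᵥ x)‖ := by
      rw [show x ⬝ᵥ ((Dᵀ * D - 1) *ᵥ x)
          = (inner ℝ (toE x) (toE ((Dᵀ * D - 1) *ᵥ x)) : ℝ) from dot_eq_inner (toE x) (toE ((Dᵀ * D - 1) *ᵥ x))]
      exact abs_real_inner_le_norm _ _
    have hz : ‖toE ((Dᵀ * D - 1) *ᵥ x)‖ ≤ ε * ‖toE x‖ :=
      Matrix.l2_opNorm_mulVec (Dᵀ * D - 1) (toE x)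
    rw [hnorm x]
    nlinarith [norm_nonneg (toE x), norm_nonneg (toE ((Dᵀ * D - 1) *ᵥ x)),
      abs_nonneg (x ⬝ᵥ ((Dᵀ * D - 1) *ᵥ x))]
  -- invertibility data
  have hDdet : IsUnit D.det := (Matrix.isUnit_iff_isUnit_det D).1 hD
  have hD1 : D * D⁻¹ = 1 := Matrix.mul_nonsing_inv D hDdet
  have hD2 : D⁻¹ * D = 1 := Matrix.nonsing_inv_mul D hDdet
  have hDinv : IsUnit (D⁻¹) := by
    rw [Matrix.isUnit_iff_isUnit_det, Matrix.det_nonsing_inv, isUnit_ringInverse]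
    exact hDdet
  have hInvNe : (D⁻¹ : Matrix (Fin n) (Fin n) ℝ) ≠ 0 := by
    intro h0
    have : (1 : Matrix (Fin n) (Fin n) ℝ) = 0 := by rw [← hD2, h0, Matrix.zero_mul]
    exact one_ne_zero this
  set c : ℝ := ‖(D⁻¹ : Matrix (Fin n) (Fin n) ℝ)‖ with hcdef
  have hc : 0 < c := norm_pos_iff.2 hInvNe
  -- the two-sided quadratic bounds
  set b : ℝ := 1 + ε with hbdef
  have hb0 : 0 < b := by linarith
  have hhi : ∀ x : Fin n → ℝ, (D *ᵥ x) ⬝ᵥ (D *ᵥ x) ≤ b * (x ⬝ᵥ x) := by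
    intro x
    have := (abs_le.1 (hquad x)).2
    have hxx := hdotnn x
    rw [hbdef]; nlinarith
  set a : ℝ := max (1 - ε) (1 / c ^ 2) with hadef
  have ha : 0 < a := lt_max_of_lt_right (by positivity)
  have ha' : 1 - ε ≤ a := le_max_left _ _
  have hlo : ∀ x : Fin n → ℝ, a * (x ⬝ᵥ x) ≤ (D *ᵥ x) ⬝ᵥ (D *ᵥ x) := by
    intro x
    have hxx := hdotnn x
    rw [hadef, max_mul_of_nonneg _ _ hxx]
    refine max_le ?_ ?_
    · have := (abs_le.1 (hquad x)).1
      nlinarith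
    · -- 1/c² bound via ‖x‖ ≤ c ‖D x‖
      have hxy : ‖toE x‖ ≤ c * ‖toE (D *ᵥ x)‖ := by
        have h : ‖toE (D⁻¹ *ᵥ (D *ᵥ x))‖ ≤ c * ‖toE (D *ᵥ x)‖ :=
          Matrix.l2_opNorm_mulVec (D⁻¹) (toE (D *ᵥ x))
        have hxy' : (D⁻¹ *ᵥ (D *ᵥ x)) = x := by
          rw [Matrix.mulVec_mulVec, hD2, Matrix.one_mulVec]
        rwa [hxy'] at h
      rw [hnorm x, hnorm (D *ᵥ x)]
      rw [div_mul_eq_mul_div, one_mul, div_le_iff₀ (by positivity)]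
      nlinarith [norm_nonneg (toE x), norm_nonneg (toE (D *ᵥ x))]
  have hab : a ≤ b := by
    set x₀ : Fin n → ℝ := Pi.single j 1 with hx₀
    have hx₀pos : 0 < x₀ ⬝ᵥ x₀ := by
      rw [hx₀]
      simp [dotProduct_single]
    have := (hlo x₀).trans (hhi x₀)
    exact le_of_mul_le_mul_right this hx₀pos
  -- first application of the key lemma
  have H1 := keyL A D hA hDAD hD μ μ' hμ hμ' a b ha hlo hhi j
  -- second application, with D⁻¹
  have hTdet : IsUnit (Dᵀ).det := by rw [Matrix.det_transpose]; exact hDdet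
  have hid : (D⁻¹)ᵀ * (Dᵀ * A * D) * D⁻¹ = A := by
    rw [Matrix.transpose_nonsing_inv]
    calc (Dᵀ)⁻¹ * (Dᵀ * A * D) * D⁻¹ = (Dᵀ)⁻¹ * Dᵀ * (A * (D * D⁻¹)) := by
          simp only [Matrix.mul_assoc]
      _ = A := by
          rw [Matrix.nonsing_inv_mul _ hTdet, hD1, Matrix.mul_one, Matrix.one_mul]
  have hA2 : ((D⁻¹)ᵀ * (Dᵀ * A * D) * D⁻¹).IsHermitian := by rw [hid]; exact hA
  have hμ2 : IsDecEigenvalueSeq ((D⁻¹)ᵀ * (Dᵀ * A * D) * D⁻¹) hA2 μ :=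
    isDec_congr hid.symm hA hA2 hμ
  have hlo2 : ∀ x : Fin n → ℝ, (1 / b) * (x ⬝ᵥ x) ≤ (D⁻¹ *ᵥ x) ⬝ᵥ (D⁻¹ *ᵥ x) := by
    intro x
    have h := hhi (D⁻¹ *ᵥ x)
    rw [show D *ᵥ (D⁻¹ *ᵥ x) = x by rw [Matrix.mulVec_mulVec, hD1, Matrix.one_mulVec]] at h
    rw [div_mul_eq_mul_div, one_mul, div_le_iff₀ hb0]
    linarith
  have hhi2 : ∀ x : Fin n → ℝ, (D⁻¹ *ᵥ x) ⬝ᵥ (D⁻¹ *ᵥ x) ≤ (1 / a) * (x ⬝ᵥ x) := by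
    intro x
    have h := hlo (D⁻¹ *ᵥ x)
    rw [show D *ᵥ (D⁻¹ *ᵥ x) = x by rw [Matrix.mulVec_mulVec, hD1, Matrix.one_mulVec]] at h
    rw [div_mul_eq_mul_div, one_mul, le_div_iff₀ ha]
    linarith
  have H2 := keyL (Dᵀ * A * D) (D⁻¹) hDAD hA2 hDinv μ' μ hμ' hμ2 (1 / b) (1 / a)
    (by positivity) hlo2 hhi2 j
  -- conclude
  rw [abs_sub_le_iff]
  constructor
  · -- μ' j - μ j ≤ |μ j| * ε
    rcases le_or_gt 0 (μ j) with hm | hm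
    · have hmax : max (a * μ j) (b * μ j) = b * μ j :=
        max_eq_right (mul_le_mul_of_nonneg_right hab hm)
      rw [hmax] at H1
      rw [abs_of_nonneg hm, hbdef] at *
      nlinarith
    · have hmax : max (a * μ j) (b * μ j) = a * μ j :=
        max_eq_left (mul_le_mul_of_nonpos_right hab hm.le)
      rw [hmax] at H1
      rw [abs_of_neg hm]
      nlinarith
  · -- μ j - μ' j ≤ |μ j| * ε
    have hinvab : 1 / b ≤ 1 / a := by
      rw [div_le_div_iff₀ hb0 ha]
      linarith
    rcases le_or_gt 0 (μ' j) with hm' | hm'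
    · have hmax : max ((1/b) * μ' j) ((1/a) * μ' j) = (1/a) * μ' j :=
        max_eq_right (mul_le_mul_of_nonneg_right hinvab hm')
      rw [hmax] at H2
      have haμ : a * μ j ≤ μ' j := by
        have := mul_le_mul_of_nonneg_left H2 ha.le
        rw [show a * ((1/a) * μ' j) = μ' j by field_simp] at this
        exact this
      rcases le_or_gt 0 (μ j) with hm | hm
      · rw [abs_of_nonneg hm]
        nlinarith
      · rw [abs_of_neg hm]
        nlinarith
    · have hmax : max ((1/b) * μ' j) ((1/a) * μ' j) = (1/b) * μ' j :=
        max_eq_left (mul_le_mul_of_nonpos_right hinvab hm'.le)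
      rw [hmax] at H2
      have hbμ : b * μ j ≤ μ' j := by
        have := mul_le_mul_of_nonneg_left H2 hb0.le
        rw [show b * ((1/b) * μ' j) = μ' j by field_simp] at this
        exact this
      have hmneg : μ j < 0 := by nlinarith
      rw [abs_of_neg hmneg, hbdef] at *
      nlinarith
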